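/- arXiv:1112.2452 — 3 statements merged into one kernel-verified Lean document; each statement's English description precedes it below -/
import Mathlib

section
/- For n ≥ 1, define the polynomial L_n(t) = Σ_{k=0}^{n−1} ((−t)^k / k!) · n^{k−1} · binomial(n, k+1) (a polynomial with rational coefficients, evaluated at real t; note n^{k−1} = 1/n when k = 0, which combines with binomial(n,1) = n to give constant term 1). Then for every n ≥ 1 and every real t, the derivative satisfies L_n′(t) = −(n/2) · Σ_{k=1}^{n−1} L_k(t) · L_{n−k}(t). -/
open Finset in
/-- The polynomial `L n` evaluated at `t`:
`L_n(t) = Σ_{k=0}^{n-1} ((-t)^k / k!) · n^(k-1) · C(n, k+1)`,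
where `n^(k-1)` is interpreted with an integer exponent (so equals `1/n` for `k = 0`). -/
noncomputable def L (n : ℕ) (t : ℝ) : ℝ :=
  ∑ k ∈ Finset.range n,
    ((-t) ^ k / (Nat.factorial k)) * (n : ℝ) ^ ((k : ℤ) - 1) * (n.choose (k + 1))


open Finset

/-- `Q m r t = Σ_{i=0}^{r} C(m, r-i) (-m)^i / i! * t^i`, i.e. the coefficient of `w^r`
in `(1+w)^m e^{-mtw}`. -/
noncomputable def Q (m r : ℕ) (t : ℝ) : ℝ :=
  ∑ i ∈ Finset.range (r+1),
    (m.choose (r-i) : ℝ) * (-(m:ℝ))^i / (Nat.factorial i) * t^i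

/-- `Qz m i t` is the coefficient of `w^(m-i)` in `(1+w)^m e^{-mtw}`, or `0` if `i > m`. -/
noncomputable def Qz (m i : ℕ) (t : ℝ) : ℝ := if i ≤ m then Q m (m-i) t else 0

lemma Q_zero (m r : ℕ) : Q m r 0 = (m.choose r : ℝ) := by
  rw [Q, Finset.sum_eq_single 0]
  · simp
  · intro i _ hi
    simp [zero_pow hi]
  · simp

lemma Qz_zero (m i : ℕ) : Qz m i 0 = (m.choose i : ℝ) := by
  rw [Qz]
  split_ifs with h
  · rw [Q_zero, Nat.choose_symm h]
  · rw [Nat.choose_eq_zero_of_lt (by omega)]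
    simp

lemma Q_zero_r (m : ℕ) (t : ℝ) : Q m 0 t = 1 := by
  simp [Q]

lemma hasDerivAt_Q (m r : ℕ) (hr : 1 ≤ r) (t : ℝ) :
    HasDerivAt (fun t => Q m r t) (-(m:ℝ) * Q m (r-1) t) t := by
  have h : HasDerivAt (fun t : ℝ => Q m r t)
      (∑ i ∈ Finset.range (r+1),
        (m.choose (r-i) : ℝ) * (-(m:ℝ))^i / (Nat.factorial i) * ((i : ℝ) * t^(i-1))) t := by
    apply HasDerivAt.fun_sum
    intro i _
    exact (hasDerivAt_pow i t).const_mul _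
  convert h using 1
  rw [Finset.sum_range_succ']
  simp only [Nat.cast_zero, zero_mul, mul_zero, add_zero]
  rw [Q, Finset.mul_sum]
  obtain ⟨s, rfl⟩ : ∃ s, r = s + 1 := ⟨r - 1, by omega⟩
  simp only [Nat.add_sub_cancel]
  apply Finset.sum_congr rfl
  intro i _
  have : (s + 1) - (i + 1) = s - i := by omega
  rw [this]
  have hfac : ((i+1).factorial : ℝ) = (i+1) * i.factorial := by
    rw [Nat.factorial_succ]; push_cast; ring
  have h1 : ((i:ℝ)+1) ≠ 0 := by positivity
  have h2 : (i.factorial : ℝ) ≠ 0 := by exact_mod_cast i.factorial_ne_zero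
  field_simp [hfac]
  rw [hfac]
  push_cast
  ring

lemma hasDerivAt_Qz (m i : ℕ) (t : ℝ) :
    HasDerivAt (fun t => Qz m i t) (-(m:ℝ) * Qz m (i+1) t) t := by
  rcases lt_or_ge m i with h | h
  · have h1 : (fun t => Qz m i t) = fun _ : ℝ => (0:ℝ) := by
      funext s; simp [Qz, Nat.not_le.mpr h]
    have h2 : Qz m (i+1) t = 0 := by simp [Qz]; omega
    rw [h1, h2, mul_zero]
    exact hasDerivAt_const _ _
  · have h1 : (fun t => Qz m i t) = fun t : ℝ => Q m (m-i) t := by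
      funext s; simp [Qz, h]
    rw [h1]
    rcases eq_or_lt_of_le h with rfl | hlt
    · have h2 : (fun t => Q i (i-i) t) = fun _ : ℝ => (1:ℝ) := by
        funext s; simp [Q_zero_r]
      have h3 : Qz i (i+1) t = 0 := by simp [Qz]
      rw [h2, h3, mul_zero]
      exact hasDerivAt_const _ _
    · have h2 : Qz m (i+1) t = Q m (m-i-1) t := by
        have he : m - (i+1) = m - i - 1 := by omega
        rw [Qz, if_pos (by omega : i+1 ≤ m), he]
      rw [h2]
      exact hasDerivAt_Q m (m-i) (by omega) t

/-- `F n j t = [z^n](θ_{j+1} - ψ θ_j)` -/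
noncomputable def F (n j : ℕ) (t : ℝ) : ℝ :=
  Qz n (j+1) t - ∑ k ∈ Finset.Ico 1 n, (Qz k 1 t / k) * Qz (n-k) j t

lemma hockey (n j : ℕ) (hj : 1 ≤ j) :
    ∑ k ∈ Finset.Ico 1 n, ((n-k).choose j) = n.choose (j+1) := by
  have h1 : ∑ k ∈ Finset.Ico 1 n, ((n-k).choose j) = ∑ k ∈ Finset.Ico 1 n, k.choose j := by
    apply Finset.sum_nbij' (fun k => n - k) (fun k => n - k)
    · intro a ha; simp only [Finset.mem_Ico] at *; omega
    · intro a ha; simp only [Finset.mem_Ico] at *; omega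
    · intro a ha; simp only [Finset.mem_Ico] at *; omega
    · intro a ha; simp only [Finset.mem_Ico] at *; omega
    · intro a ha; rfl
  rw [h1]
  clear h1
  induction n with
  | zero => simp
  | succ n ih =>
    rcases Nat.eq_zero_or_pos n with rfl | hn
    · simp [Nat.choose_eq_zero_of_lt (by omega : 1 < j + 1)]
    · rw [Finset.sum_Ico_succ_top (by omega : 1 ≤ n), ih, Nat.choose_succ_succ']
      omega

lemma F_zero (n j : ℕ) (hj : 1 ≤ j) : F n j 0 = 0 := by
  rw [F, Qz_zero]
  have h : ∀ k ∈ Finset.Ico 1 n, (Qz k 1 0 / k) * Qz (n-k) j 0 = ((n-k).choose j : ℝ) := by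
    intro k hk
    simp only [Finset.mem_Ico] at hk
    rw [Qz_zero, Qz_zero]
    have : (k.choose 1 : ℝ) = k := by simp
    rw [this, div_self (by exact_mod_cast (by omega : k ≠ 0)), one_mul]
  rw [Finset.sum_congr rfl h, ← Nat.cast_sum, hockey n j hj]
  ring

lemma hasDerivAt_F (n j : ℕ) (t : ℝ) :
    HasDerivAt (F n j)
      (-(n:ℝ) * Qz n (j+2) t
        - ∑ k ∈ Finset.Ico 1 n,
            ((-(k:ℝ) * Qz k 2 t / k) * Qz (n-k) j t
              + (Qz k 1 t / k) * (-((n-k : ℕ):ℝ) * Qz (n-k) (j+1) t))) t := by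
  apply HasDerivAt.sub
  · exact hasDerivAt_Qz n (j+1) t
  · apply HasDerivAt.fun_sum
    intro k _
    exact ((hasDerivAt_Qz k 1 t).div_const _).mul (hasDerivAt_Qz (n-k) j t)

lemma Qz_of_lt (m i : ℕ) (h : m < i) (t : ℝ) : Qz m i t = 0 := by
  rw [Qz, if_neg (by omega)]

lemma sum_cancel (n j : ℕ) (hj : 1 ≤ j) (t : ℝ)
    (IH : ∀ m, m < n → ∀ j', 1 ≤ j' → F m j' t = 0) :
    ∑ k ∈ Finset.Ico 1 n, Qz k 2 t * Qz (n-k) j t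
      = ∑ k ∈ Finset.Ico 1 n, Qz k 1 t * Qz (n-k) (j+1) t := by
  have subL : ∀ k ∈ Finset.Ico 1 n,
      Qz k 2 t * Qz (n-k) j t
        = ∑ a ∈ Finset.Ico 1 k, (Qz a 1 t / a) * Qz (k-a) 1 t * Qz (n-k) j t := by
    intro k hk
    simp only [Finset.mem_Ico] at hk
    have h0 := IH k hk.2 1 le_rfl
    rw [F] at h0
    rw [← Finset.sum_mul]
    have : Qz k 2 t = ∑ a ∈ Finset.Ico 1 k, Qz a 1 t / a * Qz (k-a) 1 t := by linarith
    rw [this]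
  have subR : ∀ k ∈ Finset.Ico 1 n,
      Qz k 1 t * Qz (n-k) (j+1) t
        = ∑ a ∈ Finset.Ico 1 (n-k), Qz k 1 t * ((Qz a 1 t / a) * Qz (n-k-a) j t) := by
    intro k hk
    simp only [Finset.mem_Ico] at hk
    have h0 := IH (n-k) (by omega) j hj
    rw [F] at h0
    rw [← Finset.mul_sum]
    have : Qz (n-k) (j+1) t = ∑ a ∈ Finset.Ico 1 (n-k), Qz a 1 t / a * Qz (n-k-a) j t := by
      linarith
    rw [this]
  rw [Finset.sum_congr rfl subL, Finset.sum_congr rfl subR]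
  rw [Finset.sum_sigma', Finset.sum_sigma']
  have hL : ∑ p ∈ (Finset.Ico 1 n).sigma (fun k => Finset.Ico 1 k),
        (Qz p.2 1 t / p.2) * Qz (p.1-p.2) 1 t * Qz (n-p.1) j t
      = ∑ p ∈ (Finset.Ico 1 n ×ˢ Finset.Ico 1 n).filter (fun p => p.1 + p.2 < n),
        (Qz p.1 1 t / p.1) * Qz p.2 1 t * Qz (n-p.1-p.2) j t := by
    apply Finset.sum_nbij' (i := fun p => (p.2, p.1 - p.2))
      (j := fun p => (⟨p.1 + p.2, p.1⟩ : Σ _ : ℕ, ℕ))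
    · intro p hp
      simp only [Finset.mem_sigma, Finset.mem_Ico] at hp
      simp only [Finset.mem_filter, Finset.mem_product, Finset.mem_Ico]
      omega
    · intro p hp
      simp only [Finset.mem_filter, Finset.mem_product, Finset.mem_Ico] at hp
      simp only [Finset.mem_sigma, Finset.mem_Ico]
      omega
    · rintro ⟨x, y⟩ hp
      simp only [Finset.mem_sigma, Finset.mem_Ico] at hp
      have h : y + (x - y) = x := by omega
      simp only [h]
    · rintro ⟨x, y⟩ hp
      simp only [Finset.mem_filter, Finset.mem_product, Finset.mem_Ico] at hp
      dsimp only
      simp only [Prod.mk.injEq]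
      exact ⟨trivial, by omega⟩
    · intro p hp
      simp only [Finset.mem_sigma, Finset.mem_Ico] at hp
      have h2 : n - p.2 - (p.1 - p.2) = n - p.1 := by omega
      simp only [h2]
  have hR : ∑ p ∈ (Finset.Ico 1 n).sigma (fun k => Finset.Ico 1 (n-k)),
        Qz p.1 1 t * ((Qz p.2 1 t / p.2) * Qz (n-p.1-p.2) j t)
      = ∑ p ∈ (Finset.Ico 1 n ×ˢ Finset.Ico 1 n).filter (fun p => p.1 + p.2 < n),
        (Qz p.1 1 t / p.1) * Qz p.2 1 t * Qz (n-p.1-p.2) j t := by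
    apply Finset.sum_nbij' (i := fun p => (p.2, p.1))
      (j := fun p => (⟨p.2, p.1⟩ : Σ _ : ℕ, ℕ))
    · intro p hp
      simp only [Finset.mem_sigma, Finset.mem_Ico] at hp
      simp only [Finset.mem_filter, Finset.mem_product, Finset.mem_Ico]
      omega
    · intro p hp
      simp only [Finset.mem_filter, Finset.mem_product, Finset.mem_Ico] at hp
      simp only [Finset.mem_sigma, Finset.mem_Ico]
      omega
    · intro p _
      rfl
    · intro p _
      rfl
    · intro p hp
      simp only [Finset.mem_sigma, Finset.mem_Ico] at hp
      have h2 : n - p.2 - p.1 = n - p.1 - p.2 := by omega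
      rw [h2]
      ring
  rw [hL, hR]

lemma F_eq_zero : ∀ n j, 1 ≤ j → ∀ t, F n j t = 0 := by
  intro n
  induction n using Nat.strong_induction_on with
  | _ n IH =>
  have key : ∀ d j, 1 ≤ j → n ≤ j + d → ∀ t, F n j t = 0 := by
    intro d
    induction d with
    | zero =>
      intro j hj hn t
      rw [F]
      have h1 : Qz n (j+1) t = 0 := Qz_of_lt _ _ (by omega) t
      have h2 : ∀ k ∈ Finset.Ico 1 n, (Qz k 1 t / k) * Qz (n-k) j t = 0 := by
        intro k hk
        simp only [Finset.mem_Ico] at hk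
        rw [Qz_of_lt (n-k) j (by omega) t, mul_zero]
      rw [h1, Finset.sum_congr rfl h2]
      simp
    | succ d ihd =>
      intro j hj hn t
      have hFj1 : ∀ s, F n (j+1) s = 0 := fun s => ihd (j+1) (by omega) (by omega) s
      -- derivative of F n j is zero everywhere
      have hderiv : ∀ s : ℝ, deriv (F n j) s = 0 := by
        intro s
        rw [(hasDerivAt_F n j s).deriv]
        have expand : ∀ k ∈ Finset.Ico 1 n,
            (-(k:ℝ) * Qz k 2 s / k) * Qz (n-k) j s
              + (Qz k 1 s / k) * (-((n-k : ℕ):ℝ) * Qz (n-k) (j+1) s)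
            = -(Qz k 2 s * Qz (n-k) j s)
              + (-(n:ℝ)) * ((Qz k 1 s / k) * Qz (n-k) (j+1) s)
              + Qz k 1 s * Qz (n-k) (j+1) s := by
          intro k hk
          simp only [Finset.mem_Ico] at hk
          have hc : ((n-k : ℕ):ℝ) = (n:ℝ) - k := by
            rw [Nat.cast_sub (by omega)]
          have hk0 : (k:ℝ) ≠ 0 := by
            exact_mod_cast (by omega : k ≠ 0)
          rw [hc]
          field_simp
          ring
        rw [Finset.sum_congr rfl expand]
        rw [Finset.sum_add_distrib, Finset.sum_add_distrib, ← Finset.mul_sum,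
          Finset.sum_neg_distrib]
        have hconv : Qz n (j+2) s = ∑ k ∈ Finset.Ico 1 n, (Qz k 1 s / k) * Qz (n-k) (j+1) s := by
          have h0 := hFj1 s
          rw [F] at h0
          linarith
        have hcan := sum_cancel n j hj s (fun m hm j' hj' => IH m hm j' hj' s)
        rw [hconv]
        linarith [hcan]
      have hdiff : Differentiable ℝ (F n j) := fun s => (hasDerivAt_F n j s).differentiableAt
      have := is_const_of_deriv_eq_zero hdiff hderiv t 0
      rw [this, F_zero n j hj]
  intro j hj t
  exact key n j hj (by omega) t

lemma L_eq (m : ℕ) (hm : 1 ≤ m) (t : ℝ) : Qz m 1 t = (m:ℝ) * L m t := by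
  rw [Qz, if_pos hm, Q, L, Finset.mul_sum]
  have hr : m - 1 + 1 = m := by omega
  rw [hr]
  apply Finset.sum_congr rfl
  intro i hi
  simp only [Finset.mem_range] at hi
  have h1 : m - 1 - i = m - (i+1) := by omega
  rw [h1, Nat.choose_symm (by omega)]
  have hm0 : (m:ℝ) ≠ 0 := by exact_mod_cast (by omega : m ≠ 0)
  have h2 : (m:ℝ) ^ ((i:ℤ) - 1) = (m:ℝ)^i / m := by
    rw [zpow_sub₀ hm0, zpow_natCast, zpow_one]
  rw [h2]
  have h3 : (-(m:ℝ))^i = (-1)^i * (m:ℝ)^i := by rw [neg_pow]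
  have h4 : (-t)^i = (-1)^i * t^i := by rw [neg_pow]
  rw [h3, h4]
  have hfac : (i.factorial : ℝ) ≠ 0 := by exact_mod_cast i.factorial_ne_zero
  field_simp

/-- The recursion `L_n' = -(n/2) Σ_{k=1}^{n-1} L_k L_{n-k}` for the polynomials `L_n`. -/
theorem deriv_L (n : ℕ) (hn : 1 ≤ n) (t : ℝ) :
    deriv (L n) t = -((n : ℝ) / 2) * ∑ k ∈ Finset.Ico 1 n, L k t * L (n - k) t := by
  have hn0 : (n:ℝ) ≠ 0 := by exact_mod_cast (by omega : n ≠ 0)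
  have hLfun : L n = fun s => Qz n 1 s / n := by
    funext s
    rw [L_eq n hn s]
    field_simp
  have hD : HasDerivAt (L n) (-(n:ℝ) * Qz n 2 t / n) t := by
    rw [hLfun]
    exact (hasDerivAt_Qz n 1 t).div_const n
  rw [hD.deriv]
  have hF := F_eq_zero n 1 le_rfl t
  rw [F] at hF
  have hsub : ∀ k ∈ Finset.Ico 1 n,
      (Qz k 1 t / k) * Qz (n-k) 1 t = ((n-k:ℕ):ℝ) * (L k t * L (n-k) t) := by
    intro k hk
    simp only [Finset.mem_Ico] at hk
    have hk0 : (k:ℝ) ≠ 0 := by exact_mod_cast (by omega : k ≠ 0)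
    rw [L_eq k (by omega) t, L_eq (n-k) (by omega) t]
    field_simp
  rw [Finset.sum_congr rfl hsub] at hF
  have hconv : Qz n 2 t = ∑ k ∈ Finset.Ico 1 n, ((n-k:ℕ):ℝ) * (L k t * L (n-k) t) := by
    linarith
  have hrefl : ∑ k ∈ Finset.Ico 1 n, ((n-k:ℕ):ℝ) * (L k t * L (n-k) t)
      = ∑ k ∈ Finset.Ico 1 n, (k:ℝ) * (L k t * L (n-k) t) := by
    apply Finset.sum_nbij' (i := fun k => n - k) (j := fun k => n - k)
    · intro a ha; simp only [Finset.mem_Ico] at *; omega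
    · intro a ha; simp only [Finset.mem_Ico] at *; omega
    · intro a ha; simp only [Finset.mem_Ico] at ha; omega
    · intro a ha; simp only [Finset.mem_Ico] at ha; omega
    · intro a ha
      simp only [Finset.mem_Ico] at ha
      have e1 : n - (n - a) = a := by omega
      rw [e1]
      ring
  have hsum : Qz n 2 t + Qz n 2 t = ∑ k ∈ Finset.Ico 1 n, (n:ℝ) * (L k t * L (n-k) t) := by
    nth_rewrite 2 [hconv]
    rw [hrefl]
    nth_rewrite 1 [hconv]
    rw [← Finset.sum_add_distrib]
    apply Finset.sum_congr rfl
    intro k hk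
    simp only [Finset.mem_Ico] at hk
    have : ((n-k:ℕ):ℝ) = (n:ℝ) - k := by rw [Nat.cast_sub (by omega)]
    rw [this]
    ring
  rw [← Finset.mul_sum] at hsum
  field_simp
  linear_combination (-1 : ℝ) * hsum
end

section
/- For all quaternions q₁ and q₂, (1/4) · Σ_{γ₁, γ₂ ∈ {1,i,j,k}} (−2·Re(γ₁γ₂)) · (−2·Re(γ₁⁻¹ · q₁ · γ₂⁻¹ · q₂)) = (−2·Re(q₁)) · (−2·Re(q₂)). Equivalently, Σ_{γ₁,γ₂ ∈ {1,i,j,k}} Re(γ₁γ₂)·Re(γ₁⁻¹ q₁ γ₂⁻¹ q₂) = 4·Re(q₁)·Re(q₂). -/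
/-- The quaternion `i`. -/
def qi : Quaternion ℝ := ⟨0, 1, 0, 0⟩
/-- The quaternion `j`. -/
def qj : Quaternion ℝ := ⟨0, 0, 1, 0⟩
/-- The quaternion `k`. -/
def qk : Quaternion ℝ := ⟨0, 0, 0, 1⟩

/-- The standard unit quaternions `1, i, j, k` indexed by `Fin 4`. -/
noncomputable def unitQuat : Fin 4 → Quaternion ℝ := ![1, qi, qj, qk]

@[simp] theorem qi_re : qi.re = 0 := rfl
@[simp] theorem qi_imI : qi.imI = 1 := rfl
@[simp] theorem qi_imJ : qi.imJ = 0 := rfl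
@[simp] theorem qi_imK : qi.imK = 0 := rfl
@[simp] theorem qj_re : qj.re = 0 := rfl
@[simp] theorem qj_imI : qj.imI = 0 := rfl
@[simp] theorem qj_imJ : qj.imJ = 1 := rfl
@[simp] theorem qj_imK : qj.imK = 0 := rfl
@[simp] theorem qk_re : qk.re = 0 := rfl
@[simp] theorem qk_imI : qk.imI = 0 := rfl
@[simp] theorem qk_imJ : qk.imJ = 0 := rfl
@[simp] theorem qk_imK : qk.imK = 1 := rfl

/-- `Σ_{γ₁,γ₂ ∈ {1,i,j,k}} Re(γ₁γ₂) Re(γ₁⁻¹ q₁ γ₂⁻¹ q₂) = 4 Re(q₁) Re(q₂)`. -/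
theorem quaternion_re_factor_sum (q₁ q₂ : Quaternion ℝ) :
    ∑ a : Fin 4, ∑ b : Fin 4,
        (unitQuat a * unitQuat b).re *
          ((unitQuat a)⁻¹ * q₁ * (unitQuat b)⁻¹ * q₂).re
      = 4 * q₁.re * q₂.re := by
  simp only [Fin.sum_univ_four, unitQuat, qi_re, qi_imI, qi_imJ, qi_imK, qj_re, qj_imI, qj_imJ, qj_imK,
    qk_re, qk_imI, qk_imJ, qk_imK, Matrix.cons_val_zero, Matrix.cons_val_one,
    Matrix.head_cons, Matrix.cons_val_two, Matrix.cons_val_three, Matrix.tail_cons,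
    Quaternion.inv_def, Quaternion.normSq_def', Quaternion.re_mul, Quaternion.re_smul,
    Quaternion.imI_smul, Quaternion.imJ_smul, Quaternion.imK_smul,
    Quaternion.re_star, Quaternion.imI_star, Quaternion.imJ_star, Quaternion.imK_star,
    Quaternion.re_one, Quaternion.imI_one, Quaternion.imJ_one, Quaternion.imK_one,
    smul_eq_mul]
  norm_num
  ring
end

section
/- Let N ≥ 1 and equip the real vector space so(N) = {X ∈ M_N(ℝ) : ᵗX + X = 0} of antisymmetric matrices with the inner product ⟨X, Y⟩ = (N/2)·Tr(ᵗX·Y). Then for any orthonormal basis (X₁, …, X_d) of so(N) (where d = N(N−1)/2) and any real N×N matrix A: Σ_{k=1}^{d} X_k · A · X_k = (1/N)·(ᵗA − Tr(A)·I_N). -/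
open Matrix

private def skewS (N : ℕ) : Submodule ℝ (Matrix (Fin N) (Fin N) ℝ) where
  carrier := {M | Mᵀ = -M}
  add_mem' := by
    intro a b ha hb
    simp only [Set.mem_setOf_eq] at *
    rw [transpose_add, ha, hb, neg_add]
  zero_mem' := by simp
  smul_mem' := by
    intro c a ha
    simp only [Set.mem_setOf_eq] at *
    rw [transpose_smul, ha, smul_neg]

private lemma mem_skewS {N : ℕ} {M : Matrix (Fin N) (Fin N) ℝ} :
    M ∈ skewS N ↔ Mᵀ = -M := Iff.rfl

private def skewIdx (N : ℕ) := Σ j : Fin N, Fin j.val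

noncomputable instance (N : ℕ) : Fintype (skewIdx N) := by unfold skewIdx; infer_instance

private lemma card_skewIdx (N : ℕ) : Fintype.card (skewIdx N) = N * (N - 1) / 2 := by
  unfold skewIdx
  rw [Fintype.card_sigma]
  simp only [Fintype.card_fin]
  have h := Fin.sum_univ_eq_sum_range id N
  simp only [id] at h
  have h2 := Finset.sum_range_id_mul_two N
  omega

private def skewPhi (N : ℕ) : skewS N →ₗ[ℝ] (skewIdx N → ℝ) where
  toFun Y s := (Y : Matrix (Fin N) (Fin N) ℝ) ⟨s.2.val, s.2.isLt.trans s.1.isLt⟩ s.1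
  map_add' a b := by funext s; simp
  map_smul' c a := by funext s; simp

private lemma skewPhi_bijective (N : ℕ) : Function.Bijective (skewPhi N) := by
  classical
  set ψ : (skewIdx N → ℝ) → Matrix (Fin N) (Fin N) ℝ := fun c =>
    Matrix.of fun a b =>
      if h : a < b then c ⟨b, ⟨a.val, h⟩⟩
      else if h' : b < a then -(c ⟨a, ⟨b.val, h'⟩⟩) else 0 with hψ
  have hψskew : ∀ c, (ψ c) ∈ skewS N := by
    intro c
    rw [mem_skewS]
    ext a b
    simp only [transpose_apply, neg_apply, hψ, Matrix.of_apply]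
    show (ψ c) b a = -((ψ c) a b)
    simp only [hψ, Matrix.of_apply]
    rcases lt_trichotomy a b with h | h | h
    · rw [dif_neg (asymm h), dif_pos h, dif_pos h]
    · subst h; rw [dif_neg (lt_irrefl a), dif_neg (lt_irrefl a), neg_zero]
    · rw [dif_pos h, dif_neg (asymm h), dif_pos h, neg_neg]
  refine Function.bijective_iff_has_inverse.2 ⟨fun c => ⟨ψ c, hψskew c⟩, ?_, ?_⟩
  · rintro ⟨Y, hY⟩
    rw [mem_skewS] at hY
    ext a b
    show (ψ (skewPhi N ⟨Y, _⟩)) a b = Y a b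
    simp only [hψ, Matrix.of_apply]
    rcases lt_trichotomy a b with h | h | h
    · rw [dif_pos h]; rfl
    · subst h
      rw [dif_neg (lt_irrefl a), dif_neg (lt_irrefl a)]
      have := congrFun (congrFun hY a) a
      simp only [transpose_apply, Matrix.neg_apply] at this
      linarith
    · rw [dif_neg (asymm h), dif_pos h]
      show -(Y b a) = Y a b
      have := congrFun (congrFun hY a) b
      simp only [transpose_apply, Matrix.neg_apply] at this
      rw [this, neg_neg]
  · intro c
    funext s
    obtain ⟨j, i⟩ := s
    show (ψ c) ⟨i.val, i.isLt.trans j.isLt⟩ j = c ⟨j, i⟩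
    have hij : (⟨i.val, i.isLt.trans j.isLt⟩ : Fin N) < j := i.isLt
    simp only [hψ, Matrix.of_apply, dif_pos hij]

private lemma finrank_skewS (N : ℕ) :
    Module.finrank ℝ (skewS N) = N * (N - 1) / 2 := by
  have e := LinearEquiv.ofBijective (skewPhi N) (skewPhi_bijective N)
  rw [e.finrank_eq, Module.finrank_fintype_fun_eq_card, card_skewIdx]

/-- The pairing `M ↦ (N/2) Tr(Bᵀ M)` as a linear map. -/
private noncomputable def pairing (N : ℕ) (B : Matrix (Fin N) (Fin N) ℝ) :
    Matrix (Fin N) (Fin N) ℝ →ₗ[ℝ] ℝ where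
  toFun M := ((N : ℝ) / 2) * (Bᵀ * M).trace
  map_add' a b := by
    show ((N : ℝ) / 2) * (Bᵀ * (a + b)).trace = _
    rw [Matrix.mul_add, trace_add]; ring
  map_smul' c a := by
    show ((N : ℝ) / 2) * (Bᵀ * (c • a)).trace = c * (((N : ℝ) / 2) * (Bᵀ * a).trace)
    rw [Matrix.mul_smul, trace_smul, smul_eq_mul]; ring

private lemma pairing_apply (N : ℕ) (B M : Matrix (Fin N) (Fin N) ℝ) :
    pairing N B M = ((N : ℝ) / 2) * (Bᵀ * M).trace := rfl

private lemma trace_transpose_mul_std (N : ℕ) (M : Matrix (Fin N) (Fin N) ℝ) (i j : Fin N) :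
    (Mᵀ * Matrix.single i j (1:ℝ)).trace = M i j := by
  simp [Matrix.trace, Matrix.diag, Matrix.mul_apply, Matrix.single, ite_and,
    Finset.sum_ite_eq, Finset.sum_ite_eq']

/-- Expansion of any skew matrix in an orthonormal family of maximal size. -/
private lemma key_expand (N : ℕ)
    (X : Fin (N * (N - 1) / 2) → Matrix (Fin N) (Fin N) ℝ)
    (hskew : ∀ k, (X k)ᵀ = -(X k))
    (horth : ∀ k l, ((N : ℝ) / 2) * ((X k)ᵀ * X l).trace = if k = l then 1 else 0)
    (hne : Nonempty (Fin (N * (N - 1) / 2)))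
    (Y : Matrix (Fin N) (Fin N) ℝ) (hY : Yᵀ = -Y) :
    Y = ∑ k, (((N : ℝ) / 2) * ((X k)ᵀ * Y).trace) • X k := by
  classical
  have hmem : ∀ k, X k ∈ skewS N := fun k => mem_skewS.2 (hskew k)
  let X' : Fin (N * (N - 1) / 2) → skewS N := fun k => ⟨X k, hmem k⟩
  have hli : LinearIndependent ℝ X' := by
    rw [Fintype.linearIndependent_iff]
    intro g hg l
    have hg' : (∑ k, g k • X k) = (0 : Matrix (Fin N) (Fin N) ℝ) := by
      have := congrArg (Subtype.val) hg
      simpa [X'] using this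
    have h := congrArg (pairing N (X l)) hg'
    rw [map_sum, map_zero] at h
    rw [Finset.sum_congr rfl fun k _ => by
      rw [_root_.map_smul, smul_eq_mul, pairing_apply, horth l k]] at h
    simpa using h
  have hcard : Fintype.card (Fin (N * (N - 1) / 2)) = Module.finrank ℝ (skewS N) := by
    rw [Fintype.card_fin, finrank_skewS]
  let b := basisOfLinearIndependentOfCardEqFinrank hli hcard
  have hb : ⇑b = X' := coe_basisOfLinearIndependentOfCardEqFinrank hli hcard
  let Y' : skewS N := ⟨Y, mem_skewS.2 hY⟩
  have hrepr := b.sum_repr Y'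
  have hsum : ∑ k, b.repr Y' k • X k = Y := by
    have := congrArg (Subtype.val) hrepr
    simpa [hb, X', Y'] using this
  have hcoef : ∀ l, b.repr Y' l = ((N : ℝ) / 2) * ((X l)ᵀ * Y).trace := by
    intro l
    have h := congrArg (⇑(pairing N (X l))) hsum
    rw [map_sum] at h
    rw [Finset.sum_congr rfl fun k _ => by
      rw [_root_.map_smul, smul_eq_mul, pairing_apply, horth l k]] at h
    rw [pairing_apply] at h
    simpa using h
  calc Y = ∑ k, b.repr Y' k • X k := hsum.symm
    _ = ∑ k, (((N : ℝ) / 2) * ((X k)ᵀ * Y).trace) • X k :=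
      Finset.sum_congr rfl fun k _ => by rw [hcoef k]

/-- If `(X k)` is an orthonormal basis of the space `so(N)` of antisymmetric real
matrices for the inner product `⟨X, Y⟩ = (N/2) Tr(ᵗX Y)` (a family of `N(N-1)/2`
orthonormal antisymmetric matrices is automatically a basis), then for every real
matrix `A`: `Σ_k X_k A X_k = (1/N)(ᵗA - Tr(A) I_N)`. -/
theorem sum_sandwich_orthonormal_basis_orthogonal (N : ℕ) (hN : 1 ≤ N)
    (X : Fin (N * (N - 1) / 2) → Matrix (Fin N) (Fin N) ℝ)
    (hskew : ∀ k, (X k)ᵀ = -(X k))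
    (horth : ∀ k l, ((N : ℝ) / 2) * ((X k)ᵀ * X l).trace = if k = l then 1 else 0)
    (A : Matrix (Fin N) (Fin N) ℝ) :
    ∑ k, X k * A * X k
      = (1 / (N : ℝ)) • (Aᵀ - A.trace • (1 : Matrix (Fin N) (Fin N) ℝ)) := by
  classical
  rcases Nat.lt_or_ge N 2 with h2 | h2
  · -- here N = 1
    have hN1 : N = 1 := by omega
    subst hN1
    haveI : IsEmpty (Fin (1 * (1 - 1) / 2)) := by
      rw [show 1 * (1 - 1) / 2 = 0 from by norm_num]; infer_instance
    rw [Finset.univ_eq_empty, Finset.sum_empty]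
    ext i j
    fin_cases i; fin_cases j
    simp [Matrix.smul_apply, Matrix.sub_apply, Matrix.one_apply, Matrix.trace, Matrix.diag]
  · have hne : Nonempty (Fin (N * (N - 1) / 2)) := by
      refine ⟨⟨0, ?_⟩⟩
      have h1 : 2 ≤ N * (N - 1) := by
        have h3 : 1 ≤ N - 1 := by omega
        simpa using Nat.mul_le_mul h2 h3
      exact Nat.div_pos ((by norm_num : 2 ≤ 2).trans h1) (by norm_num)
    have hN0 : (N : ℝ) ≠ 0 := Nat.cast_ne_zero.2 (by omega)
    have hstdT : ∀ p q : Fin N, (Matrix.single p q (1:ℝ))ᵀ = Matrix.single q p 1 := by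
      intro p q; ext a b; simp [Matrix.single, and_comm]
    have hker : ∀ p q : Fin N,
        (Matrix.single p q (1:ℝ) - Matrix.single q p 1) = ∑ k, ((N:ℝ) * X k p q) • X k := by
      intro p q
      have hYskew : (Matrix.single p q (1:ℝ) - Matrix.single q p 1)ᵀ
          = -(Matrix.single p q (1:ℝ) - Matrix.single q p 1) := by
        rw [transpose_sub, hstdT, hstdT, neg_sub]
      have h := key_expand N X hskew horth hne _ hYskew
      rw [h]
      refine Finset.sum_congr rfl fun k _ => ?_
      congr 1
      rw [Matrix.mul_sub, trace_sub, trace_transpose_mul_std, trace_transpose_mul_std]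
      have hqp : X k q p = -(X k p q) := by
        have := congrFun (congrFun (hskew k) p) q
        simpa using this
      rw [hqp]; ring
    have hker' : ∀ p q a c : Fin N, ∑ k, X k p q * X k a c
        = (1/(N:ℝ)) * ((if p = a ∧ q = c then 1 else 0) - (if q = a ∧ p = c then 1 else 0)) := by
      intro p q a c
      have h := congrFun (congrFun (hker p q) a) c
      simp only [Matrix.sub_apply, Matrix.sum_apply, Matrix.smul_apply, smul_eq_mul] at h
      have hstd : ∀ (u v : Fin N), Matrix.single u v (1:ℝ) a c
          = if u = a ∧ v = c then 1 else 0 := by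
        intro u v; simp [Matrix.single]
      rw [hstd, hstd] at h
      have h2 : ((if p = a ∧ q = c then (1:ℝ) else 0) - (if q = a ∧ p = c then 1 else 0))
          = (N:ℝ) * ∑ k, X k p q * X k a c := by
        rw [h, Finset.mul_sum]; exact Finset.sum_congr rfl fun k _ => by ring
      rw [h2]; field_simp
    ext i j
    calc (∑ k, X k * A * X k) i j
        = ∑ k, ∑ c, ∑ p, X k i p * A p c * X k c j := by
          simp only [Matrix.sum_apply, Matrix.mul_apply, Finset.sum_mul]
      _ = ∑ c, ∑ p, ∑ k, X k i p * A p c * X k c j := by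
          rw [Finset.sum_comm]
          exact Finset.sum_congr rfl fun c _ => Finset.sum_comm
      _ = ∑ c, ∑ p, A p c * ((1/(N:ℝ)) * ((if i = c ∧ p = j then 1 else 0)
            - (if p = c ∧ i = j then 1 else 0))) := by
          refine Finset.sum_congr rfl fun c _ => Finset.sum_congr rfl fun p _ => ?_
          rw [← hker' i p c j, Finset.mul_sum]
          exact Finset.sum_congr rfl fun k _ => by ring
      _ = (1/(N:ℝ)) * (A j i - (if i = j then A.trace else 0)) := by
          simp only [mul_sub, mul_ite, mul_one, mul_zero, Finset.sum_sub_distrib, ite_and]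
          rw [Matrix.trace]
          simp [Finset.sum_ite_eq, Finset.sum_ite_eq', Matrix.diag, Finset.mul_sum, mul_sub]
          split_ifs <;> simp [mul_comm]
      _ = ((1 / (N : ℝ)) • (Aᵀ - A.trace • (1 : Matrix (Fin N) (Fin N) ℝ))) i j := by
          simp [Matrix.smul_apply, Matrix.sub_apply, Matrix.one_apply, smul_eq_mul, mul_ite]
end
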